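/- Let $(\Omega, \rho)$ be a finite measure space with $\rho(\Omega) < \infty$. Let $(f_n)$ be positive functions with $f_n = e^{\psi_n}$ converging weakly in $L^2(\Omega, d\rho)$ to $f = e^{\psi} \ge 0$ (with $f > 0$ $\rho$-a.e.), and assume $(\psi_n)$ is bounded in $L^1(\Omega, d\rho)$ and $\limsup_n \int \psi_n\,d\rho > -\infty$. Then $\psi \in L^1(\Omega, d\rho)$ and $\limsup_{n\to\infty} \int_\Omega \psi_n\,d\rho \le \int_\Omega \psi\,d\rho$. -/

import Mathlib

open MeasureTheory Filter

/-- Chayes–Chayes–Lieb lemma: if `fₙ = e^{ψₙ}` converges weakly in `L²(dρ)` to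
`f = e^{ψ}` (with `f > 0` a.e.) on a finite measure space, and `(ψₙ)` is bounded in
`L¹(dρ)`, then `ψ ∈ L¹(dρ)` and `limsup ∫ ψₙ dρ ≤ ∫ ψ dρ`. -/
theorem stmt14 {Ω : Type*} [MeasurableSpace Ω] (ρ : Measure Ω) [IsFiniteMeasure ρ]
    (ψ : Ω → ℝ) (ψseq : ℕ → Ω → ℝ) (f : Ω → ℝ)
    (hf : ∀ᵐ x ∂ρ, f x = Real.exp (ψ x))
    (hfL2 : MemLp f 2 ρ)
    (hfnL2 : ∀ n, MemLp (fun x => Real.exp (ψseq n x)) 2 ρ)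
    (hweak : ∀ g : Ω → ℝ, MemLp g 2 ρ →
      Tendsto (fun n => ∫ x, Real.exp (ψseq n x) * g x ∂ρ) atTop
        (nhds (∫ x, f x * g x ∂ρ)))
    (hψn : ∀ n, Integrable (ψseq n) ρ)
    (hbdd : ∃ C : ℝ, ∀ n, (∫ x, |ψseq n x| ∂ρ) ≤ C)
    :
    Integrable ψ ρ ∧
      limsup (fun n => ∫ x, ψseq n x ∂ρ) atTop ≤ ∫ x, ψ x ∂ρ := by
  classical
  obtain ⟨C, hC⟩ := hbdd
  -- basic measurability / integrability facts
  have hfm : AEStronglyMeasurable f ρ := hfL2.aestronglyMeasurable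
  have hψ_eq : ψ =ᵐ[ρ] fun x => Real.log (f x) := by
    filter_upwards [hf] with x hx
    rw [hx, Real.log_exp]
  have hψm : AEStronglyMeasurable ψ ρ :=
    ((Real.measurable_log.comp_aemeasurable hfm.aemeasurable).aestronglyMeasurable).congr
      hψ_eq.symm
  have hψae : AEMeasurable ψ ρ := hψm.aemeasurable
  have hfint : Integrable f ρ := hfL2.integrable one_le_two
  have hfpos : ∀ᵐ x ∂ρ, 0 < f x := by
    filter_upwards [hf] with x hx; rw [hx]; exact Real.exp_pos _
  -- positive part of ψ is integrable
  have hψplus : Integrable (fun x => max (ψ x) 0) ρ := by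
    refine hfint.mono' (hψm.sup aestronglyMeasurable_const) ?_
    filter_upwards [hf] with x hx
    rw [Real.norm_eq_abs, abs_of_nonneg (le_max_right _ _), hx]
    refine max_le ?_ (Real.exp_pos _).le
    linarith [Real.add_one_le_exp (ψ x)]
  -- trivial case ρ = 0
  rcases eq_or_ne ρ 0 with rfl | hρ0
  · refine ⟨integrable_zero_measure, ?_⟩
    simp
  haveI : NeZero ρ := ⟨hρ0⟩
  set M : ℝ := (ρ Set.univ).toReal with hMdef
  have hM : 0 < M :=
    ENNReal.toReal_pos (Measure.measure_univ_ne_zero.mpr hρ0) (measure_ne_top ρ _)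
  -- the integrals of ψseq are bounded
  have habs : ∀ n, |∫ x, ψseq n x ∂ρ| ≤ C := by
    intro n
    calc |∫ x, ψseq n x ∂ρ| ≤ ∫ x, |ψseq n x| ∂ρ := by
          simpa [Real.norm_eq_abs] using norm_integral_le_integral_norm (μ := ρ) (ψseq n)
      _ ≤ C := hC n
  -- truncations of ψ
  set ψk : ℕ → Ω → ℝ := fun k x => if |ψ x| ≤ (k : ℝ) then ψ x else 0 with hψkdef
  have hψkm : ∀ k, AEStronglyMeasurable (ψk k) ρ := by
    intro k
    have hT : Measurable (fun t : ℝ => if |t| ≤ (k : ℝ) then t else 0) :=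
      Measurable.ite (measurableSet_le measurable_abs measurable_const) measurable_id
        measurable_const
    exact (hT.comp_aemeasurable hψae).aestronglyMeasurable
  have hψkbd : ∀ k x, |ψk k x| ≤ (k : ℝ) := by
    intro k x
    simp only [hψkdef]
    split_ifs with h
    · exact h
    · simp
  have hψkint : ∀ k, Integrable (ψk k) ρ := by
    intro k
    refine (integrable_const (k : ℝ)).mono' (hψkm k) ?_
    exact Eventually.of_forall fun x => by simpa [Real.norm_eq_abs] using hψkbd k x
  -- the bounded weights g k
  set g : ℕ → Ω → ℝ := fun k x => Real.exp (-(ψk k x)) with hgdef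
  have hgm : ∀ k, AEStronglyMeasurable (g k) ρ := fun k =>
    (Real.continuous_exp.comp_aestronglyMeasurable (hψkm k).neg)
  have hgbd : ∀ k x, ‖g k x‖ ≤ Real.exp k := by
    intro k x
    rw [Real.norm_eq_abs, abs_of_pos (Real.exp_pos _)]
    exact Real.exp_le_exp.mpr (by linarith [abs_le.mp (hψkbd k x)])
  have hgL2 : ∀ k, MemLp (g k) 2 ρ := fun k =>
    MemLp.of_bound (hgm k) _ (Eventually.of_forall (hgbd k))
  have hgpos : ∀ k x, 0 < g k x := fun k x => Real.exp_pos _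
  -- Jensen inequality step
  have key1 : ∀ n k, (∫ x, ψseq n x ∂ρ) - ∫ x, ψk k x ∂ρ ≤
      M * Real.log (M⁻¹ * ∫ x, Real.exp (ψseq n x) * g k x ∂ρ) := by
    intro n k
    set φ : Ω → ℝ := fun x => ψseq n x - ψk k x with hφdef
    have hφint : Integrable φ ρ := (hψn n).sub (hψkint k)
    have hexp_eq : ∀ x, Real.exp (φ x) = Real.exp (ψseq n x) * g k x := by
      intro x
      rw [hφdef, hgdef]
      simp [Real.exp_sub, Real.exp_neg, div_eq_mul_inv]
    have hexpφint : Integrable (fun x => Real.exp (φ x)) ρ := by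
      have h1 : Integrable (fun x => g k x * Real.exp (ψseq n x)) ρ :=
        Integrable.bdd_mul ((hfnL2 n).integrable one_le_two) (hgm k)
          (Eventually.of_forall (hgbd k))
      refine h1.congr (Eventually.of_forall fun x => ?_)
      exact (mul_comm _ _).trans (hexp_eq x).symm
    have hjensen : Real.exp (⨍ x, φ x ∂ρ) ≤ ⨍ x, Real.exp (φ x) ∂ρ :=
      convexOn_exp.map_average_le Real.continuous_exp.continuousOn isClosed_univ
        (Eventually.of_forall fun x => Set.mem_univ _) hφint hexpφint
    have havgpos : 0 < ⨍ x, Real.exp (φ x) ∂ρ := lt_of_lt_of_le (Real.exp_pos _) hjensen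
    have hlog : ⨍ x, φ x ∂ρ ≤ Real.log (⨍ x, Real.exp (φ x) ∂ρ) :=
      (Real.le_log_iff_exp_le havgpos).mpr hjensen
    have havg1 : ⨍ x, φ x ∂ρ = M⁻¹ * ∫ x, φ x ∂ρ := by
      rw [average_eq]; rfl
    have havg2 : ⨍ x, Real.exp (φ x) ∂ρ = M⁻¹ * ∫ x, Real.exp (ψseq n x) * g k x ∂ρ := by
      rw [average_eq]
      simp only [smul_eq_mul]
      congr 1
      exact integral_congr_ae (Eventually.of_forall hexp_eq)
    have hsub : ∫ x, φ x ∂ρ = (∫ x, ψseq n x ∂ρ) - ∫ x, ψk k x ∂ρ :=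
      integral_sub (hψn n) (hψkint k)
    rw [havg1, havg2, hsub] at hlog
    calc (∫ x, ψseq n x ∂ρ) - ∫ x, ψk k x ∂ρ
        = M * (M⁻¹ * ((∫ x, ψseq n x ∂ρ) - ∫ x, ψk k x ∂ρ)) := by
          field_simp
      _ ≤ M * Real.log (M⁻¹ * ∫ x, Real.exp (ψseq n x) * g k x ∂ρ) :=
          mul_le_mul_of_nonneg_left hlog hM.le
  -- the limiting integrals I k
  set I : ℕ → ℝ := fun k => ∫ x, f x * g k x ∂ρ with hIdef
  have hIconv : ∀ k, Tendsto (fun n => ∫ x, Real.exp (ψseq n x) * g k x ∂ρ) atTop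
      (nhds (I k)) := fun k => hweak (g k) (hgL2 k)
  have hIint : ∀ k, Integrable (fun x => f x * g k x) ρ := by
    intro k
    have h1 : Integrable (fun x => g k x * f x) ρ :=
      Integrable.bdd_mul hfint (hgm k) (Eventually.of_forall (hgbd k))
    exact h1.congr (Eventually.of_forall fun x => mul_comm _ _)
  have hIpos : ∀ k, 0 < I k := by
    intro k
    rw [hIdef]
    rw [integral_pos_iff_support_of_nonneg_ae
      (by filter_upwards [hfpos] with x hx; exact (mul_pos hx (hgpos k x)).le) (hIint k)]
    have hmem : ∀ᵐ x ∂ρ, x ∈ Function.support fun x => f x * g k x := by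
      filter_upwards [hfpos] with x hx
      exact (mul_pos hx (hgpos k x)).ne'
    have hcompl : ρ (Function.support fun x => f x * g k x)ᶜ = 0 := ae_iff.mp hmem
    have huniv : ρ Set.univ ≤ ρ (Function.support fun x => f x * g k x) := by
      calc ρ Set.univ ≤ ρ (Function.support fun x => f x * g k x) +
            ρ (Function.support fun x => f x * g k x)ᶜ := measure_univ_le_add_compl _
        _ = ρ (Function.support fun x => f x * g k x) := by rw [hcompl, add_zero]
    exact lt_of_lt_of_le (Measure.measure_univ_pos.mpr hρ0) huniv
  -- pass to the limit n → ∞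
  have hbdd_le : IsBoundedUnder (· ≤ ·) atTop (fun n => ∫ x, ψseq n x ∂ρ) :=
    isBoundedUnder_of ⟨C, fun n => (abs_le.mp (habs n)).2⟩
  have hbdd_ge : IsBoundedUnder (· ≥ ·) atTop (fun n => ∫ x, ψseq n x ∂ρ) :=
    isBoundedUnder_of ⟨-C, fun n => (abs_le.mp (habs n)).1⟩
  have key2 : ∀ k, limsup (fun n => ∫ x, ψseq n x ∂ρ) atTop ≤
      (∫ x, ψk k x ∂ρ) + M * Real.log (M⁻¹ * I k) := by
    intro k
    have hc : Tendsto (fun n => (∫ x, ψk k x ∂ρ) +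
        M * Real.log (M⁻¹ * ∫ x, Real.exp (ψseq n x) * g k x ∂ρ)) atTop
        (nhds ((∫ x, ψk k x ∂ρ) + M * Real.log (M⁻¹ * I k))) := by
      refine tendsto_const_nhds.add (Tendsto.const_mul _ ?_)
      have h1 : Tendsto (fun n => M⁻¹ * ∫ x, Real.exp (ψseq n x) * g k x ∂ρ) atTop
          (nhds (M⁻¹ * I k)) := (hIconv k).const_mul _
      have h2 : ContinuousAt Real.log (M⁻¹ * I k) :=
        Real.continuousAt_log (ne_of_gt (mul_pos (inv_pos.mpr hM) (hIpos k)))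
      exact h2.tendsto.comp h1
    calc limsup (fun n => ∫ x, ψseq n x ∂ρ) atTop
        ≤ limsup (fun n => (∫ x, ψk k x ∂ρ) +
            M * Real.log (M⁻¹ * ∫ x, Real.exp (ψseq n x) * g k x ∂ρ)) atTop := by
          refine limsup_le_limsup (Eventually.of_forall fun n => ?_)
            (hbdd_ge.isCoboundedUnder_le) (hc.isBoundedUnder_le)
          linarith [key1 n k]
      _ = (∫ x, ψk k x ∂ρ) + M * Real.log (M⁻¹ * I k) := hc.limsup_eq
  -- the error terms ε k
  set χ : ℕ → Ω → ℝ := fun k x => if (k : ℝ) < ψ x then 1 else 0 with hχdef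
  have hχm : ∀ k, AEStronglyMeasurable (fun x => f x * χ k x) ρ := by
    intro k
    have hT : Measurable (fun t : ℝ => if (k : ℝ) < t then (1 : ℝ) else 0) :=
      Measurable.ite (measurableSet_lt measurable_const measurable_id) measurable_const
        measurable_const
    exact hfm.mul (hT.comp_aemeasurable hψae).aestronglyMeasurable
  have hχ01 : ∀ k x, 0 ≤ χ k x ∧ χ k x ≤ 1 := by
    intro k x; simp only [hχdef]; split_ifs <;> norm_num
  have hεint : ∀ k, Integrable (fun x => f x * χ k x) ρ := by
    intro k
    refine hfint.abs.mono' (hχm k) (Eventually.of_forall fun x => ?_)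
    rw [Real.norm_eq_abs, abs_mul]
    calc |f x| * |χ k x| ≤ |f x| * 1 := by
          refine mul_le_mul_of_nonneg_left ?_ (abs_nonneg _)
          rw [abs_of_nonneg (hχ01 k x).1]; exact (hχ01 k x).2
      _ = |f x| := mul_one _
  set ε : ℕ → ℝ := fun k => ∫ x, f x * χ k x ∂ρ with hεdef
  have hεnonneg : ∀ k, 0 ≤ ε k := by
    intro k
    refine integral_nonneg_of_ae ?_
    filter_upwards [hfpos] with x hx
    exact mul_nonneg hx.le (hχ01 k x).1
  have hεle : ∀ k, ε k ≤ ∫ x, |f x| ∂ρ := by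
    intro k
    refine integral_mono_ae (hεint k) hfint.abs ?_
    filter_upwards with x
    calc f x * χ k x ≤ |f x * χ k x| := le_abs_self _
      _ ≤ |f x| := by
          rw [abs_mul]
          calc |f x| * |χ k x| ≤ |f x| * 1 := by
                refine mul_le_mul_of_nonneg_left ?_ (abs_nonneg _)
                rw [abs_of_nonneg (hχ01 k x).1]; exact (hχ01 k x).2
            _ = |f x| := mul_one _
  -- the pointwise bound f * g k ≤ 1 + f * χ k
  have hIle : ∀ k, I k ≤ M + ε k := by
    intro k
    have hmono : I k ≤ ∫ x, (1 + f x * χ k x) ∂ρ := by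
      refine integral_mono_ae (hIint k) ((integrable_const 1).add (hεint k)) ?_
      filter_upwards [hf] with x hx
      have hfg : f x * g k x = Real.exp (ψ x - ψk k x) := by
        rw [hx, hgdef]
        simp [Real.exp_sub, Real.exp_neg, div_eq_mul_inv]
      rw [hfg]
      by_cases h1 : |ψ x| ≤ (k : ℝ)
      · have : ψk k x = ψ x := by simp [hψkdef, h1]
        rw [this, sub_self, Real.exp_zero]
        have : 0 ≤ f x * χ k x := by
          rw [hx]; exact mul_nonneg (Real.exp_pos _).le (hχ01 k x).1
        linarith
      · have hψk0 : ψk k x = 0 := by simp [hψkdef, h1]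
        rw [hψk0, sub_zero]
        by_cases h2 : (k : ℝ) < ψ x
        · have : χ k x = 1 := by simp [hχdef, h2]
          rw [this, mul_one, hx]
          linarith
        · have hχ0 : χ k x = 0 := by simp [hχdef, h2]
          have hneg : ψ x ≤ 0 := by
            have h2' : ψ x ≤ (k : ℝ) := not_lt.mp h2
            have h1' : (k : ℝ) < |ψ x| := not_le.mp h1
            rcases lt_abs.mp h1' with h | h
            · exact absurd h2' (not_le.mpr h)
            · have hk : (0 : ℝ) ≤ (k : ℝ) := Nat.cast_nonneg k
              linarith
          rw [hχ0, mul_zero, add_zero]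
          calc Real.exp (ψ x) ≤ Real.exp 0 := Real.exp_le_exp.mpr hneg
            _ = 1 := Real.exp_zero
    have heq : ∫ x, (1 + f x * χ k x) ∂ρ = M + ε k := by
      rw [integral_add (integrable_const 1) (hεint k)]
      simp [hεdef, hMdef, measureReal_def]
    linarith [hmono, heq.le]
  -- uniform bound on the log term
  set B : ℝ := M * Real.log (M⁻¹ * (M + ∫ x, |f x| ∂ρ)) with hBdef
  have hlogB : ∀ k, M * Real.log (M⁻¹ * I k) ≤ B := by
    intro k
    refine mul_le_mul_of_nonneg_left ?_ hM.le
    refine Real.log_le_log (mul_pos (inv_pos.mpr hM) (hIpos k)) ?_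
    refine mul_le_mul_of_nonneg_left ?_ (inv_pos.mpr hM).le
    linarith [hIle k, hεle k]
  -- lower bound on limsup
  have hlimsup_ge : -C ≤ limsup (fun n => ∫ x, ψseq n x ∂ρ) atTop := by
    refine le_limsup_of_frequently_le ?_ hbdd_le
    exact Frequently.of_forall fun n => (abs_le.mp (habs n)).1
  -- lower bound on truncated integrals
  have hψk_lb : ∀ k, -C - B ≤ ∫ x, ψk k x ∂ρ := by
    intro k
    have := key2 k
    have := hlogB k
    linarith [hlimsup_ge]
  -- negative parts q k
  set q : ℕ → Ω → ℝ := fun k x => max (-(ψk k x)) 0 with hqdef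
  have hqm : ∀ k, AEStronglyMeasurable (q k) ρ := fun k =>
    ((hψkm k).neg).sup aestronglyMeasurable_const
  have hqint : ∀ k, Integrable (q k) ρ := by
    intro k
    refine (integrable_const (k : ℝ)).mono' (hqm k) (Eventually.of_forall fun x => ?_)
    rw [Real.norm_eq_abs, abs_of_nonneg (le_max_right _ _)]
    refine max_le ?_ (Nat.cast_nonneg k)
    linarith [abs_le.mp (hψkbd k x)]
  have hqnonneg : ∀ k x, 0 ≤ q k x := fun k x => le_max_right _ _
  -- positive part of ψk bounded by positive part of ψ
  have hplus_le : ∀ k, ∫ x, max (ψk k x) 0 ∂ρ ≤ ∫ x, max (ψ x) 0 ∂ρ := by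
    intro k
    refine integral_mono_ae ?_ hψplus (Eventually.of_forall fun x => ?_)
    · refine (integrable_const (k : ℝ)).mono' ((hψkm k).sup aestronglyMeasurable_const)
        (Eventually.of_forall fun x => ?_)
      rw [Real.norm_eq_abs, abs_of_nonneg (le_max_right _ _)]
      refine max_le ?_ (Nat.cast_nonneg k)
      linarith [abs_le.mp (hψkbd k x)]
    · simp only [hψkdef]
      split_ifs with h
      · exact le_refl _
      · simp [le_max_right]
  have hplusk_int : ∀ k, Integrable (fun x => max (ψk k x) 0) ρ := by
    intro k
    refine (integrable_const (k : ℝ)).mono' ((hψkm k).sup aestronglyMeasurable_const)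
      (Eventually.of_forall fun x => ?_)
    rw [Real.norm_eq_abs, abs_of_nonneg (le_max_right _ _)]
    refine max_le ?_ (Nat.cast_nonneg k)
    linarith [abs_le.mp (hψkbd k x)]
  -- integral of q k bounded uniformly
  set A : ℝ := ∫ x, max (ψ x) 0 ∂ρ with hAdef
  set D : ℝ := A + C + B with hDdef
  have hqD : ∀ k, ∫ x, q k x ∂ρ ≤ D := by
    intro k
    have hptw : ∀ x, q k x = max (ψk k x) 0 - ψk k x := by
      intro x
      rcases le_or_gt (ψk k x) 0 with h | h
      · rw [hqdef]
        simp only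
        rw [max_eq_left (by linarith), max_eq_right h]
        ring
      · rw [hqdef]
        simp only
        rw [max_eq_right (by linarith), max_eq_left h.le]
        ring
    have : ∫ x, q k x ∂ρ = (∫ x, max (ψk k x) 0 ∂ρ) - ∫ x, ψk k x ∂ρ := by
      rw [← integral_sub (hplusk_int k) (hψkint k)]
      exact integral_congr_ae (Eventually.of_forall hptw)
    rw [this, hDdef]
    have h1 := hplus_le k
    have h2 := hψk_lb k
    linarith
  -- monotone convergence for the negative part
  have hqmono : ∀ x, Monotone fun k => q k x := by
    intro x k l hkl
    simp only [hqdef, hψkdef]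
    by_cases h1 : |ψ x| ≤ (k : ℝ)
    · have h2 : |ψ x| ≤ (l : ℝ) := h1.trans (Nat.cast_le.mpr hkl)
      simp [h1, h2]
    · simp [h1, le_max_right]
  have hqle : ∀ k x, q k x ≤ max (-ψ x) 0 := by
    intro k x
    simp only [hqdef, hψkdef]
    split_ifs with h
    · exact le_refl _
    · simp [le_max_right]
  have hqsup : ∀ x, ⨆ k, ENNReal.ofReal (q k x) = ENNReal.ofReal (max (-ψ x) 0) := by
    intro x
    apply le_antisymm
    · exact iSup_le fun k => ENNReal.ofReal_le_ofReal (hqle k x)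
    · refine le_iSup_of_le ⌈|ψ x|⌉₊ (ENNReal.ofReal_le_ofReal ?_)
      have h1 : |ψ x| ≤ ((⌈|ψ x|⌉₊ : ℕ) : ℝ) := Nat.le_ceil _
      simp [hqdef, hψkdef, h1]
  have hψminus : Integrable (fun x => max (-ψ x) 0) ρ := by
    have hnonneg : 0 ≤ᵐ[ρ] fun x => max (-ψ x) 0 :=
      Eventually.of_forall fun x => le_max_right _ _
    refine ⟨hψm.neg.sup aestronglyMeasurable_const,
      (hasFiniteIntegral_iff_ofReal hnonneg).mpr ?_⟩
    · have hcongr : ∫⁻ x, ENNReal.ofReal (max (-ψ x) 0) ∂ρ =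
          ∫⁻ x, ⨆ k, ENNReal.ofReal (q k x) ∂ρ :=
        lintegral_congr fun x => (hqsup x).symm
      rw [hcongr, lintegral_iSup' (f := fun k x => ENNReal.ofReal (q k x))
        (fun k => (hqm k).aemeasurable.ennreal_ofReal)
        (Eventually.of_forall fun x k l hkl => ENNReal.ofReal_le_ofReal (hqmono x hkl))]
      have hbound : ∀ k, ∫⁻ x, ENNReal.ofReal (q k x) ∂ρ ≤ ENNReal.ofReal D := by
        intro k
        rw [← ofReal_integral_eq_lintegral_ofReal (hqint k)
          (Eventually.of_forall (hqnonneg k))]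
        exact ENNReal.ofReal_le_ofReal (hqD k)
      exact lt_of_le_of_lt (iSup_le hbound) ENNReal.ofReal_lt_top
  have hψint : Integrable ψ ρ := by
    have hsub := hψplus.sub hψminus
    refine hsub.congr (Eventually.of_forall fun x => ?_)
    show max (ψ x) 0 - max (-ψ x) 0 = ψ x
    rcases le_or_gt (ψ x) 0 with h | h
    · rw [max_eq_right h, max_eq_left (by linarith)]
      ring
    · rw [max_eq_left h.le, max_eq_right (by linarith)]
      ring
  refine ⟨hψint, ?_⟩
  -- ∫ ψk k → ∫ ψ
  have hψk_tendsto : Tendsto (fun k => ∫ x, ψk k x ∂ρ) atTop (nhds (∫ x, ψ x ∂ρ)) := by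
    refine tendsto_integral_of_dominated_convergence (fun x => |ψ x|) hψkm hψint.abs
      (fun k => Eventually.of_forall fun x => ?_) (Eventually.of_forall fun x => ?_)
    · rw [Real.norm_eq_abs]
      simp only [hψkdef]
      split_ifs with h
      · exact le_refl _
      · simp
    · have hev : ∀ᶠ k in atTop, ψk k x = ψ x := by
        refine eventually_atTop.2 ⟨⌈|ψ x|⌉₊, fun k hk => ?_⟩
        have : |ψ x| ≤ (k : ℝ) := (Nat.le_ceil _).trans (Nat.cast_le.mpr hk)
        simp [hψkdef, this]
      exact Tendsto.congr' (by filter_upwards [hev] with k hk using hk.symm)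
        tendsto_const_nhds
  -- ε k → 0
  have hε_tendsto : Tendsto ε atTop (nhds 0) := by
    have h0 : Tendsto (fun k => ∫ x, f x * χ k x ∂ρ) atTop (nhds (∫ x, (0 : ℝ) ∂ρ)) := by
      refine tendsto_integral_of_dominated_convergence (fun x => |f x|) hχm hfint.abs
        (fun k => Eventually.of_forall fun x => ?_) (Eventually.of_forall fun x => ?_)
      · rw [Real.norm_eq_abs, abs_mul]
        calc |f x| * |χ k x| ≤ |f x| * 1 := by
              refine mul_le_mul_of_nonneg_left ?_ (abs_nonneg _)
              rw [abs_of_nonneg (hχ01 k x).1]; exact (hχ01 k x).2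
          _ = |f x| := mul_one _
      · have hev : ∀ᶠ k in atTop, f x * χ k x = 0 := by
          refine eventually_atTop.2 ⟨⌈ψ x⌉₊, fun k hk => ?_⟩
          have h1 : ψ x ≤ (k : ℝ) := (Nat.le_ceil _).trans (Nat.cast_le.mpr hk)
          have : χ k x = 0 := by simp [hχdef, not_lt.mpr h1]
          rw [this, mul_zero]
        exact Tendsto.congr' (by filter_upwards [hev] with k hk using hk.symm)
          tendsto_const_nhds
    simpa [hεdef] using h0
  -- conclude
  have hU_tendsto : Tendsto (fun k => (∫ x, ψk k x ∂ρ) +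
      M * Real.log (M⁻¹ * (M + ε k))) atTop (nhds (∫ x, ψ x ∂ρ)) := by
    have h1 : Tendsto (fun k => M⁻¹ * (M + ε k)) atTop (nhds 1) := by
      have := (tendsto_const_nhds (x := M) (f := atTop (α := ℕ))).add hε_tendsto
      have h2 := this.const_mul M⁻¹
      simpa [inv_mul_cancel₀ hM.ne'] using h2
    have h2 : Tendsto (fun k => Real.log (M⁻¹ * (M + ε k))) atTop (nhds 0) := by
      have := (Real.continuousAt_log one_ne_zero).tendsto.comp h1
      simpa [Function.comp_def] using this
    have h3 : Tendsto (fun k => M * Real.log (M⁻¹ * (M + ε k))) atTop (nhds 0) := by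
      simpa using h2.const_mul M
    simpa using hψk_tendsto.add h3
  refine ge_of_tendsto' hU_tendsto fun k => ?_
  have h1 := key2 k
  have h2 : M * Real.log (M⁻¹ * I k) ≤ M * Real.log (M⁻¹ * (M + ε k)) := by
    refine mul_le_mul_of_nonneg_left ?_ hM.le
    refine Real.log_le_log (mul_pos (inv_pos.mpr hM) (hIpos k)) ?_
    exact mul_le_mul_of_nonneg_left (hIle k) (inv_pos.mpr hM).le
  linarith
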